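/- arXiv:1312.2067 — 2 statements merged into one kernel-verified Lean document; each statement's English description precedes it below -/
import Mathlib

section
/- Let n ≥ 1 and assume D((uC_φ)ⁿ) is dense in L²(μ) and all J_i (0 ≤ i ≤ n) are finite a.e. Then uC_φ is n-expansive, i.e. Σ_{i=0}^{n} (-1)^i C(n,i) ‖(uC_φ)^i f‖² ≤ 0 for all f ∈ D((uC_φ)ⁿ), if and only if Δ_{J,n}(x) := Σ_{i=0}^{n} (-1)^i C(n,i) J_i(x) ≤ 0 for μ-almost every x. -/
open MeasureTheory ENNReal Finset

private lemma memLp_two_iff' {α : Type*} [MeasurableSpace α] {μ : Measure α} {g : α → ℂ}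
    (hg : Measurable g) :
    MemLp g 2 μ ↔ ∫⁻ x, (‖g x‖₊ : ℝ≥0∞) ^ 2 ∂μ < ∞ := by
  rw [MemLp, eLpNorm_eq_lintegral_rpow_enorm_toReal two_ne_zero ENNReal.ofNat_ne_top]
  have h2 : ∀ x : ℝ≥0∞, x ^ ((2:ℝ≥0∞).toReal) = x ^ 2 := by
    intro x
    rw [ENNReal.toReal_ofNat, show (2:ℝ) = ((2:ℕ):ℝ) by norm_num, ENNReal.rpow_natCast]
  simp only [h2]
  simp only [enorm_eq_nnnorm]
  constructor
  · rintro ⟨-, h⟩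
    have := ENNReal.rpow_lt_top_iff_of_pos (x := ∫⁻ x, (‖g x‖₊ : ℝ≥0∞) ^ 2 ∂μ)
      (y := 1 / (2:ℝ≥0∞).toReal) (by norm_num)
    exact this.mp h
  · intro h
    refine ⟨hg.aestronglyMeasurable, ?_⟩
    exact ENNReal.rpow_lt_top_of_nonneg (by norm_num) h.ne

/-- Proposition 2.6(i): `uC_φ` is `n`-expansive iff `Δ_{J,n} ≤ 0` a.e. -/
theorem stmt7
    {X : Type*} [MeasurableSpace X] (μ : Measure X) [SigmaFinite μ]
    (u : X → ℂ) (hu : Measurable u)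
    (φ : X → X) (hφ : Measurable φ)
    (hns : (μ.map φ) ≪ μ)
    (J : ℕ → X → ℝ≥0∞)
    (hJ0 : J 0 = fun _ => 1)
    (hJ : ∀ i : ℕ, J (i + 1) =
      ((μ.withDensity fun x => J i x * (‖u x‖₊ : ℝ≥0∞) ^ 2).map φ).rnDeriv μ)
    (hfin : ∀ i, ∀ᵐ x ∂μ, J i x < ∞)
    (T : (X → ℂ) → X → ℂ) (hT : T = fun f x => u x * f (φ x))
    (n : ℕ) (hn : 1 ≤ n)
    (hdense : Dense {f : Lp ℂ 2 μ |
        ∀ i ≤ n, MemLp (T^[i] (f : X → ℂ)) 2 μ}) :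
    (∀ f : X → ℂ, Measurable f → (∀ i ≤ n, MemLp (T^[i] f) 2 μ) →
        ∑ i ∈ range (n + 1),
          (-1 : ℝ) ^ i * (n.choose i) * ∫ x, ‖(T^[i] f) x‖ ^ 2 ∂μ ≤ 0) ↔
      ∀ᵐ x ∂μ, ∑ i ∈ range (n + 1),
          (-1 : ℝ) ^ i * (n.choose i) * (J i x).toReal ≤ 0 := by
  have hJm : ∀ i, Measurable (J i) := by
    intro i
    cases i with
    | zero => rw [hJ0]; exact measurable_const
    | succ i => rw [hJ i]; exact Measure.measurable_rnDeriv _ _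
  have hTm : ∀ (i : ℕ) (g : X → ℂ), Measurable g → Measurable (T^[i] g) := by
    intro i
    induction i with
    | zero => intro g hg; simpa using hg
    | succ i ih =>
      intro g hg
      rw [Function.iterate_succ_apply]
      exact ih _ (by rw [hT]; exact hu.mul (hg.comp hφ))
  have hwd : ∀ i, (μ.withDensity fun x => J i x * (‖u x‖₊ : ℝ≥0∞) ^ 2).map φ
      = μ.withDensity (J (i + 1)) := by
    intro i
    have hac : ((μ.withDensity fun x => J i x * (‖u x‖₊ : ℝ≥0∞) ^ 2).map φ) ≪ μ :=
      ((withDensity_absolutelyContinuous μ _).map hφ).trans hns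
    rw [hJ i]
    exact (Measure.withDensity_rnDeriv_eq _ _ hac).symm
  have hkey : ∀ (i : ℕ) (g : X → ℂ), Measurable g →
      ∫⁻ x, (‖T^[i] g x‖₊ : ℝ≥0∞) ^ 2 ∂μ = ∫⁻ x, J i x * (‖g x‖₊ : ℝ≥0∞) ^ 2 ∂μ := by
    intro i
    induction i with
    | zero => intro g hg; simp [hJ0]
    | succ i ih =>
      intro g hg
      have hTg : Measurable (T g) := by rw [hT]; exact hu.mul (hg.comp hφ)
      have hgsq : Measurable fun x => (‖g x‖₊ : ℝ≥0∞) ^ 2 := hg.nnnorm.coe_nnreal_ennreal.pow_const 2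
      calc ∫⁻ x, (‖T^[i+1] g x‖₊ : ℝ≥0∞) ^ 2 ∂μ
          = ∫⁻ x, (‖T^[i] (T g) x‖₊ : ℝ≥0∞) ^ 2 ∂μ := by rw [Function.iterate_succ_apply]
        _ = ∫⁻ x, J i x * (‖T g x‖₊ : ℝ≥0∞) ^ 2 ∂μ := ih (T g) hTg
        _ = ∫⁻ x, ((fun x => J i x * (‖u x‖₊ : ℝ≥0∞) ^ 2)
              * fun x => (‖g (φ x)‖₊ : ℝ≥0∞) ^ 2) x ∂μ := by
              apply lintegral_congr
              intro x
              simp only [hT, Pi.mul_apply, nnnorm_mul, ENNReal.coe_mul, mul_pow]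
              ring
        _ = ∫⁻ x, (‖g (φ x)‖₊ : ℝ≥0∞) ^ 2
              ∂(μ.withDensity fun x => J i x * (‖u x‖₊ : ℝ≥0∞) ^ 2) := by
              exact (lintegral_withDensity_eq_lintegral_mul μ
                ((hJm i).mul (hu.nnnorm.coe_nnreal_ennreal.pow_const 2)) (hgsq.comp hφ)).symm
        _ = ∫⁻ y, (‖g y‖₊ : ℝ≥0∞) ^ 2
              ∂((μ.withDensity fun x => J i x * (‖u x‖₊ : ℝ≥0∞) ^ 2).map φ) :=
              (lintegral_map hgsq hφ).symm
        _ = ∫⁻ y, (‖g y‖₊ : ℝ≥0∞) ^ 2 ∂(μ.withDensity (J (i + 1))) := by rw [hwd i]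
        _ = ∫⁻ x, J (i + 1) x * (‖g x‖₊ : ℝ≥0∞) ^ 2 ∂μ :=
              lintegral_withDensity_eq_lintegral_mul μ (hJm (i + 1)) hgsq
  -- The common computation
  have key2 : ∀ f : X → ℂ, Measurable f → (∀ i ≤ n, MemLp (T^[i] f) 2 μ) →
      (∀ i ∈ range (n + 1), Integrable (fun x => (J i x).toReal * ‖f x‖ ^ 2) μ) ∧
      ∑ i ∈ range (n + 1), ((-1 : ℝ) ^ i * (n.choose i)) * ∫ x, ‖(T^[i] f) x‖ ^ 2 ∂μ
        = ∫ x, (∑ i ∈ range (n + 1), ((-1 : ℝ) ^ i * (n.choose i)) * (J i x).toReal) * ‖f x‖ ^ 2 ∂μ := by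
    intro f hf hmem
    have hfin_i : ∀ i ∈ range (n + 1), ∫⁻ x, J i x * (‖f x‖₊ : ℝ≥0∞) ^ 2 ∂μ ≠ ∞ := by
      intro i hi
      rw [← hkey i f hf]
      exact ((memLp_two_iff' (hTm i f hf)).mp (hmem i (Nat.lt_succ_iff.mp (mem_range.mp hi)))).ne
    have hFm : ∀ i, Measurable fun x => J i x * (‖f x‖₊ : ℝ≥0∞) ^ 2 :=
      fun i => (hJm i).mul (hf.nnnorm.coe_nnreal_ennreal.pow_const 2)
    have hptw : ∀ i x, (J i x * (‖f x‖₊ : ℝ≥0∞) ^ 2).toReal = (J i x).toReal * ‖f x‖ ^ 2 := by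
      intro i x
      rw [ENNReal.toReal_mul, ENNReal.toReal_pow, coe_toReal, coe_nnnorm]
    have hInt : ∀ i ∈ range (n + 1), Integrable (fun x => (J i x).toReal * ‖f x‖ ^ 2) μ := by
      intro i hi
      have := integrable_toReal_of_lintegral_ne_top (hFm i).aemeasurable (hfin_i i hi)
      simpa only [hptw i] using this
    refine ⟨hInt, ?_⟩
    have hEq_i : ∀ i ∈ range (n + 1),
        ∫ x, ‖(T^[i] f) x‖ ^ 2 ∂μ = ∫ x, (J i x).toReal * ‖f x‖ ^ 2 ∂μ := by
      intro i hi
      have h1 : ∫ x, ‖(T^[i] f) x‖ ^ 2 ∂μ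
          = (∫⁻ x, (‖T^[i] f x‖₊ : ℝ≥0∞) ^ 2 ∂μ).toReal := by
        rw [show (fun x => ‖(T^[i] f) x‖ ^ 2) = fun x => (((‖T^[i] f x‖₊ : ℝ≥0∞)) ^ 2).toReal
          from funext fun x => by rw [ENNReal.toReal_pow, coe_toReal, coe_nnnorm]]
        exact integral_toReal ((hTm i f hf).nnnorm.coe_nnreal_ennreal.pow_const 2).aemeasurable
          (ae_of_all _ fun x => ENNReal.pow_lt_top ENNReal.coe_lt_top)
      have h2 : ∫ x, (J i x).toReal * ‖f x‖ ^ 2 ∂μ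
          = (∫⁻ x, J i x * (‖f x‖₊ : ℝ≥0∞) ^ 2 ∂μ).toReal := by
        rw [show (fun x => (J i x).toReal * ‖f x‖ ^ 2)
            = fun x => (J i x * (‖f x‖₊ : ℝ≥0∞) ^ 2).toReal
          from funext fun x => (hptw i x).symm]
        refine integral_toReal (hFm i).aemeasurable ?_
        filter_upwards [hfin i] with x hx
        exact ENNReal.mul_lt_top hx (ENNReal.pow_lt_top ENNReal.coe_lt_top)
      rw [h1, h2, hkey i f hf]
    calc ∑ i ∈ range (n + 1), ((-1 : ℝ) ^ i * (n.choose i)) * ∫ x, ‖(T^[i] f) x‖ ^ 2 ∂μ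
        = ∑ i ∈ range (n + 1), ∫ x, ((-1 : ℝ) ^ i * (n.choose i)) * ((J i x).toReal * ‖f x‖ ^ 2) ∂μ := by
          refine Finset.sum_congr rfl fun i hi => ?_
          rw [hEq_i i hi]
          exact (integral_const_mul _ _).symm
      _ = ∫ x, ∑ i ∈ range (n + 1), ((-1 : ℝ) ^ i * (n.choose i)) * ((J i x).toReal * ‖f x‖ ^ 2) ∂μ :=
          (integral_finset_sum _ fun i hi => (hInt i hi).const_mul _).symm
      _ = ∫ x, (∑ i ∈ range (n + 1), ((-1 : ℝ) ^ i * (n.choose i)) * (J i x).toReal) * ‖f x‖ ^ 2 ∂μ := by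
          congr 1
          funext x
          rw [Finset.sum_mul]
          exact Finset.sum_congr rfl fun i _ =>
            (mul_assoc ((-1 : ℝ) ^ i * (n.choose i)) _ _).symm
  constructor
  · -- expansive → a.e. inequality
    intro hyp
    by_contra hcon
    rw [ae_iff] at hcon
    set Δ : X → ℝ :=
      fun x => ∑ i ∈ range (n + 1), (-1 : ℝ) ^ i * (n.choose i) * (J i x).toReal with hΔdef
    have hΔm : Measurable Δ := by
      apply Finset.measurable_sum
      intro i _
      exact ((hJm i).ennreal_toReal).const_mul _
    have hA : {x | ¬ (Δ x ≤ 0)} = {x | 0 < Δ x} := by ext x; simp [not_le]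
    rw [hA] at hcon
    have hJfin : ∀ᵐ x ∂μ, ∀ i ∈ range (n + 1), J i x < ∞ :=
      (ae_ball_iff (range (n + 1)).countable_toSet).mpr fun i _ => hfin i
    rw [ae_iff] at hJfin
    set G : ℕ → Set X := fun k =>
      (spanningSets μ k ∩ {x | ∀ i ∈ range (n + 1), J i x ≤ (k : ℝ≥0∞)})
        ∩ {x | (1 : ℝ) / (k + 1) ≤ Δ x} with hGdef
    have hGmeas : ∀ k, MeasurableSet (G k) := by
      intro k
      refine ((measurableSet_spanningSets μ k).inter ?_).inter
        (measurableSet_le measurable_const hΔm)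
      have : {x | ∀ i ∈ range (n + 1), J i x ≤ (k : ℝ≥0∞)} =
          ⋂ i ∈ range (n + 1), {x | J i x ≤ (k : ℝ≥0∞)} := by ext x; simp
      rw [this]
      exact MeasurableSet.biInter (range (n + 1)).countable_toSet
        fun i _ => measurableSet_le (hJm i) measurable_const
    have hcover : {x | 0 < Δ x} ∩ {x | ∀ i ∈ range (n + 1), J i x < ∞} ⊆ ⋃ k, G k := by
      rintro x ⟨hx1, hx2⟩
      obtain ⟨k1, hk1⟩ := exists_nat_gt (1 / Δ x)
      have hk1pos : 0 < (k1 : ℝ) := lt_trans (div_pos one_pos hx1) hk1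
      set k2 : ℕ := (range (n + 1)).sup fun i => ⌈(J i x).toReal⌉₊ with hk2def
      have hk2 : ∀ i ∈ range (n + 1), J i x ≤ (k2 : ℝ≥0∞) := by
        intro i hi
        have hne : J i x ≠ ∞ := (hx2 i hi).ne
        calc J i x = ENNReal.ofReal ((J i x).toReal) := (ENNReal.ofReal_toReal hne).symm
          _ ≤ ENNReal.ofReal ((⌈(J i x).toReal⌉₊ : ℝ)) :=
              ENNReal.ofReal_le_ofReal (Nat.le_ceil _)
          _ = ((⌈(J i x).toReal⌉₊ : ℝ≥0∞)) := ENNReal.ofReal_natCast _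
          _ ≤ (k2 : ℝ≥0∞) := by
              exact_mod_cast Nat.cast_le.mpr (Finset.le_sup (f := fun i => ⌈(J i x).toReal⌉₊) hi)
      set k := max (max k1 k2) (spanningSetsIndex μ x) with hkdef
      refine Set.mem_iUnion.mpr ⟨k, ⟨⟨?_, ?_⟩, ?_⟩⟩
      · exact monotone_spanningSets μ (le_max_right _ _) (mem_spanningSetsIndex μ x)
      · intro i hi
        exact (hk2 i hi).trans (by
          exact_mod_cast Nat.cast_le.mpr ((le_max_right k1 k2).trans (le_max_left _ _)))
      · show (1 : ℝ) / (k + 1) ≤ Δ x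
        have h1 : (1 : ℝ) / (k + 1) ≤ 1 / k1 := by
          apply one_div_le_one_div_of_le hk1pos
          have : (k1 : ℝ) ≤ (k : ℝ) := by
            exact_mod_cast (le_max_left k1 k2).trans (le_max_left _ _)
          linarith
        have h2 : (1 : ℝ) / k1 ≤ Δ x := by
          rw [div_le_iff₀ hk1pos]
          rw [div_lt_iff₀ hx1] at hk1
          linarith
        linarith
    have hnull : ¬ μ (⋃ k, G k) = 0 := by
      intro h0
      apply hcon
      have hsub : {x | 0 < Δ x} ⊆ (⋃ k, G k) ∪ {x | ¬ ∀ i ∈ range (n + 1), J i x < ∞} := by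
        intro x hx
        by_cases hx2 : ∀ i ∈ range (n + 1), J i x < ∞
        · exact Or.inl (hcover ⟨hx, hx2⟩)
        · exact Or.inr hx2
      exact measure_mono_null hsub (measure_union_null h0 hJfin)
    obtain ⟨k, hk⟩ : ∃ k, μ (G k) ≠ 0 := by
      by_contra hall
      push_neg at hall
      exact hnull (measure_iUnion_null hall)
    have hGfin : μ (G k) ≠ ∞ :=
      ((measure_mono fun x hx => hx.1.1).trans_lt (measure_spanningSets_lt_top μ k)).ne
    set f : X → ℂ := (G k).indicator fun _ => (1 : ℂ) with hfdef
    have hfmeas : Measurable f := measurable_const.indicator (hGmeas k)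
    have hfsq : ∀ x, ‖f x‖ ^ 2 = (G k).indicator (fun _ => (1 : ℝ)) x := by
      intro x
      by_cases hx : x ∈ G k
      · simp [hfdef, Set.indicator_of_mem hx]
      · simp [hfdef, Set.indicator_of_notMem hx]
    have hmem : ∀ i ≤ n, MemLp (T^[i] f) 2 μ := by
      intro i hi
      rw [memLp_two_iff' (hTm i f hfmeas), hkey i f hfmeas]
      have hb : ∀ x, J i x * (‖f x‖₊ : ℝ≥0∞) ^ 2 ≤
          (G k).indicator (fun _ => (k : ℝ≥0∞)) x := by
        intro x
        by_cases hx : x ∈ G k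
        · rw [Set.indicator_of_mem hx]
          have : f x = 1 := Set.indicator_of_mem hx _
          rw [this]
          simpa using hx.1.2 i (mem_range.mpr (Nat.lt_succ_of_le hi))
        · rw [Set.indicator_of_notMem hx]
          have : f x = 0 := Set.indicator_of_notMem hx _
          simp [this]
      calc ∫⁻ x, J i x * (‖f x‖₊ : ℝ≥0∞) ^ 2 ∂μ
          ≤ ∫⁻ x, (G k).indicator (fun _ => (k : ℝ≥0∞)) x ∂μ := lintegral_mono hb
        _ = (k : ℝ≥0∞) * μ (G k) := lintegral_indicator_const (hGmeas k) _
        _ < ∞ := ENNReal.mul_lt_top (ENNReal.natCast_lt_top k) hGfin.lt_top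
    obtain ⟨hInt, hEq⟩ := key2 f hfmeas hmem
    have hle := hyp f hfmeas hmem
    rw [hEq] at hle
    have hptw2 : (fun x => (∑ i ∈ range (n + 1),
        ((-1 : ℝ) ^ i * (n.choose i)) * (J i x).toReal) * ‖f x‖ ^ 2)
        = (G k).indicator Δ := by
      funext x
      rw [hfsq x]
      by_cases hx : x ∈ G k
      · simp [Set.indicator_of_mem hx, hΔdef]
      · simp [Set.indicator_of_notMem hx]
    rw [hptw2, integral_indicator (hGmeas k)] at hle
    have hIntOn : IntegrableOn Δ (G k) μ := by
      rw [← integrable_indicator_iff (hGmeas k), ← hptw2]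
      have : (fun x => (∑ i ∈ range (n + 1),
          ((-1 : ℝ) ^ i * (n.choose i)) * (J i x).toReal) * ‖f x‖ ^ 2)
          = fun x => ∑ i ∈ range (n + 1),
            ((-1 : ℝ) ^ i * (n.choose i)) * ((J i x).toReal * ‖f x‖ ^ 2) := by
        funext x
        rw [Finset.sum_mul]
        exact Finset.sum_congr rfl fun i _ =>
          (mul_assoc ((-1 : ℝ) ^ i * (n.choose i)) _ _)
      rw [this]
      exact integrable_finset_sum _ fun i hi => (hInt i hi).const_mul _
    have hlow := setIntegral_ge_of_const_le (hGmeas k) hGfin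
      (fun x hx => hx.2) hIntOn
    have hpos : 0 < (1 : ℝ) / (k + 1) * (μ (G k)).toReal := by
      have h1 : (0:ℝ) < 1 / (k + 1) := by positivity
      have h2 : (0:ℝ) < (μ (G k)).toReal := ENNReal.toReal_pos hk hGfin
      exact mul_pos h1 h2
    rw [smul_eq_mul, Measure.real] at hlow
    change _ ≤ ∫ x in G k, Δ x ∂μ at hlow
    linarith
  · -- a.e. inequality → expansive
    intro hae f hf hmem
    rw [(key2 f hf hmem).2]
    apply integral_nonpos_of_ae
    filter_upwards [hae] with x hx
    exact mul_nonpos_iff.mpr (Or.inr ⟨hx, sq_nonneg _⟩)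
end

section
/- Assume D((uC_φ)²) is dense in L²(μ), all J_i finite a.e., and fix k ≥ 1. Then uC_φ is k-hyperexpansive (Σ_{j=0}^{n} (-1)^j C(n,j) ‖(uC_φ)^j f‖² ≤ 0 for all f ∈ D((uC_φ)ⁿ) and all 1 ≤ n ≤ k) if and only if Δ_{J,i}(x) := Σ_{j=0}^{i} (-1)^j C(i,j) J_j(x) ≤ 0 μ-a.e. for each i = 1, …, k. -/
open MeasureTheory ENNReal Finset Function

set_option linter.unusedSectionVars false
set_option maxHeartbeats 1000000

section Aux
variable {X : Type*} [MeasurableSpace X] {μ : Measure X} [SigmaFinite μ]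
  {u : X → ℂ} {φ : X → X} {J : ℕ → X → ℝ≥0∞}

lemma sqkey (g : X → ℂ) (x : X) :
    ENNReal.ofReal (‖g x‖ ^ 2) = (‖g x‖₊ : ℝ≥0∞) ^ 2 := by
  rw [ENNReal.ofReal_pow (norm_nonneg _), ← coe_nnnorm, ENNReal.ofReal_coe_nnreal]

lemma memLp2_iff {g : X → ℂ} (hg : AEStronglyMeasurable g μ) :
    MemLp g 2 μ ↔ ∫⁻ x, (‖g x‖₊ : ℝ≥0∞) ^ 2 ∂μ < ∞ := by
  rw [memLp_two_iff_integrable_sq_norm hg]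
  have hsm : AEStronglyMeasurable (fun x => ‖g x‖ ^ 2) μ := by
    exact hg.norm.pow 2
  have hkey : ∀ x, (‖(‖g x‖ ^ 2)‖₊ : ℝ≥0∞) = (‖g x‖₊ : ℝ≥0∞) ^ 2 := by
    intro x
    rw [nnnorm_pow, nnnorm_norm]
    push_cast
    ring
  constructor
  · intro h
    have := h.2
    simp only [HasFiniteIntegral, enorm_eq_nnnorm, hkey] at this
    exact this
  · intro h
    refine ⟨hsm, ?_⟩
    simp only [HasFiniteIntegral, enorm_eq_nnnorm, hkey]
    exact h

lemma int_sq_eq {g : X → ℂ} (hg : AEStronglyMeasurable g μ) :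
    ∫ x, ‖g x‖ ^ 2 ∂μ = (∫⁻ x, (‖g x‖₊ : ℝ≥0∞) ^ 2 ∂μ).toReal := by
  have hsm : AEStronglyMeasurable (fun x => ‖g x‖ ^ 2) μ := by
    exact hg.norm.pow 2
  rw [integral_eq_lintegral_of_nonneg_ae (ae_of_all _ fun x => sq_nonneg _) hsm]
  congr 1
  exact lintegral_congr fun x => sqkey g x

lemma Jmeas (hJ0 : J 0 = fun _ => 1)
    (hJ : ∀ i : ℕ, J (i + 1) =
      ((μ.withDensity fun x => J i x * (‖u x‖₊ : ℝ≥0∞) ^ 2).map φ).rnDeriv μ)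
    (i : ℕ) : Measurable (J i) := by
  cases i with
  | zero => rw [hJ0]; exact measurable_const
  | succ i => rw [hJ i]; exact Measure.measurable_rnDeriv _ _

lemma Tmeas (hu : Measurable u) (hφ : Measurable φ) (j : ℕ) :
    ∀ f : X → ℂ, Measurable f →
      Measurable ((fun g x => u x * g (φ x) : (X → ℂ) → X → ℂ)^[j] f) := by
  induction j with
  | zero => intro f hf; simpa using hf
  | succ j ih =>
    intro f hf
    rw [Function.iterate_succ_apply]
    exact ih _ (hu.mul (hf.comp hφ))

lemma keyL (hu : Measurable u) (hφ : Measurable φ) (hns : (μ.map φ) ≪ μ)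
    (hJ0 : J 0 = fun _ => 1)
    (hJ : ∀ i : ℕ, J (i + 1) =
      ((μ.withDensity fun x => J i x * (‖u x‖₊ : ℝ≥0∞) ^ 2).map φ).rnDeriv μ)
    (j : ℕ) :
    ∀ f : X → ℂ, Measurable f →
      ∫⁻ x, (‖((fun g x => u x * g (φ x) : (X → ℂ) → X → ℂ)^[j] f) x‖₊ : ℝ≥0∞) ^ 2 ∂μ
        = ∫⁻ x, J j x * (‖f x‖₊ : ℝ≥0∞) ^ 2 ∂μ := by
  induction j with
  | zero => intro f hf; simp [hJ0]
  | succ j ih =>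
    intro f hf
    have hTf : Measurable (fun x => u x * f (φ x)) := hu.mul (hf.comp hφ)
    rw [Function.iterate_succ_apply, ih _ hTf]
    have h1 : ∀ x, J j x * (‖u x * f (φ x)‖₊ : ℝ≥0∞) ^ 2
        = (J j x * (‖u x‖₊ : ℝ≥0∞) ^ 2) * (‖f (φ x)‖₊ : ℝ≥0∞) ^ 2 := by
      intro x; rw [nnnorm_mul]; push_cast; ring
    simp only [h1]
    set w : X → ℝ≥0∞ := fun x => J j x * (‖u x‖₊ : ℝ≥0∞) ^ 2 with hw
    have hwm : Measurable w :=
      (Jmeas hJ0 hJ j).mul ((hu.nnnorm.coe_nnreal_ennreal).pow_const 2)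
    have hg : Measurable fun y => (‖f y‖₊ : ℝ≥0∞) ^ 2 :=
      (hf.nnnorm.coe_nnreal_ennreal).pow_const 2
    have hac : (μ.withDensity w).map φ ≪ μ := by
      refine Measure.AbsolutelyContinuous.mk fun s hs h0 => ?_
      rw [Measure.map_apply hφ hs, withDensity_apply _ (hφ hs)]
      have hφs : μ (φ ⁻¹' s) = 0 := by
        have := hns h0
        rwa [Measure.map_apply hφ hs] at this
      rw [Measure.restrict_eq_zero.mpr hφs, lintegral_zero_measure]
    calc ∫⁻ x, w x * (‖f (φ x)‖₊ : ℝ≥0∞) ^ 2 ∂μ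
        = ∫⁻ x, (‖f (φ x)‖₊ : ℝ≥0∞) ^ 2 ∂(μ.withDensity w) :=
          (lintegral_withDensity_eq_lintegral_mul μ hwm (hg.comp hφ)).symm
      _ = ∫⁻ y, (‖f y‖₊ : ℝ≥0∞) ^ 2 ∂((μ.withDensity w).map φ) :=
          (lintegral_map hg hφ).symm
      _ = ∫⁻ y, (‖f y‖₊ : ℝ≥0∞) ^ 2 ∂(μ.withDensity (J (j + 1))) := by
          rw [hJ j, Measure.withDensity_rnDeriv_eq _ _ hac]
      _ = ∫⁻ y, J (j + 1) y * (‖f y‖₊ : ℝ≥0∞) ^ 2 ∂μ :=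
          lintegral_withDensity_eq_lintegral_mul μ (Jmeas hJ0 hJ (j + 1)) hg

end Aux

/-- Theorem 2.12(i): `uC_φ` is `k`-hyperexpansive iff `Δ_{J,i} ≤ 0` a.e.
for every `i = 1, …, k`. -/
theorem stmt14
    {X : Type*} [MeasurableSpace X] (μ : Measure X) [SigmaFinite μ]
    (u : X → ℂ) (hu : Measurable u)
    (φ : X → X) (hφ : Measurable φ)
    (hns : (μ.map φ) ≪ μ)
    (J : ℕ → X → ℝ≥0∞)
    (hJ0 : J 0 = fun _ => 1)
    (hJ : ∀ i : ℕ, J (i + 1) =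
      ((μ.withDensity fun x => J i x * (‖u x‖₊ : ℝ≥0∞) ^ 2).map φ).rnDeriv μ)
    (hfin : ∀ i, ∀ᵐ x ∂μ, J i x < ∞)
    (T : (X → ℂ) → X → ℂ) (hT : T = fun f x => u x * f (φ x))
    (k : ℕ) (hk : 1 ≤ k)
    (hdense : Dense {f : Lp ℂ 2 μ |
        ∀ i ≤ 2, MemLp (T^[i] (f : X → ℂ)) 2 μ}) :
    (∀ n : ℕ, 1 ≤ n → n ≤ k →
        ∀ f : X → ℂ, Measurable f → (∀ j ≤ n, MemLp (T^[j] f) 2 μ) →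
          ∑ j ∈ range (n + 1),
            (-1 : ℝ) ^ j * (n.choose j) * ∫ x, ‖(T^[j] f) x‖ ^ 2 ∂μ ≤ 0) ↔
      ∀ i : ℕ, 1 ≤ i → i ≤ k →
        ∀ᵐ x ∂μ, ∑ j ∈ range (i + 1),
            (-1 : ℝ) ^ j * (i.choose j) * (J j x).toReal ≤ 0 := by
  subst hT
  have hJm : ∀ i, Measurable (J i) := Jmeas hJ0 hJ
  have hTm := Tmeas hu hφ
  have key := keyL hu hφ hns hJ0 hJ
  constructor
  · -- hyperexpansivity ⇒ a.e. inequality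
    intro H i h1 hi
    by_contra hcon
    set Δ : X → ℝ := fun x => ∑ j ∈ range (i + 1),
        (-1 : ℝ) ^ j * (i.choose j) * (J j x).toReal with hΔ
    have hΔm : Measurable Δ :=
      Finset.measurable_sum _ fun j _ => ((hJm j).ennreal_toReal).const_mul _
    have h0 : μ {x | 0 < Δ x} ≠ 0 := by
      simpa [ae_iff, not_le, hΔ] using hcon
    have hbad : μ {x | ¬ ∀ j, J j x < ∞} = 0 := by
      have := ae_all_iff.2 hfin
      rwa [ae_iff] at this
    set G := {x | 0 < Δ x ∧ ∀ j, J j x < ∞} with hG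
    have hGne : μ G ≠ 0 := by
      intro h
      apply h0
      have hsub : {x | 0 < Δ x} ⊆ G ∪ {x | ¬ ∀ j, J j x < ∞} := by
        intro x hx
        by_cases hx2 : ∀ j, J j x < ∞
        · exact Or.inl ⟨hx, hx2⟩
        · exact Or.inr hx2
      have hle := measure_union_le (μ := μ) G {x | ¬ ∀ j, J j x < ∞}
      have := (measure_mono hsub).trans hle
      simp only [h, hbad, add_zero] at this
      exact le_antisymm this zero_le
    have hGm : MeasurableSet G := by
      have hGeq : G = {x | 0 < Δ x} ∩ ⋂ j, {x | J j x < ∞} := by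
        ext x; simp [hG, Set.mem_iInter]
      rw [hGeq]
      exact (measurableSet_lt measurable_const hΔm).inter
        (MeasurableSet.iInter fun j => measurableSet_lt (hJm j) measurable_const)
    set F : ℕ → Set X := fun M =>
      (G ∩ spanningSets μ M) ∩ {x | ∀ j ∈ range (i + 1), J j x ≤ (M : ℝ≥0∞)} with hF
    have hFm : ∀ M, MeasurableSet (F M) := by
      intro M
      refine (hGm.inter (measurableSet_spanningSets μ M)).inter ?_
      have heq : {x | ∀ j ∈ range (i + 1), J j x ≤ (M : ℝ≥0∞)}
          = ⋂ j ∈ range (i + 1), {x | J j x ≤ (M : ℝ≥0∞)} := by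
        ext x; simp
      rw [heq]
      exact MeasurableSet.biInter (Set.to_countable _)
        fun j _ => measurableSet_le (hJm j) measurable_const
    have hmono : Monotone F := by
      intro a b hab x hx
      obtain ⟨⟨h1x, h2x⟩, h3x⟩ := hx
      exact ⟨⟨h1x, monotone_spanningSets μ hab h2x⟩,
        fun j hj => (h3x j hj).trans (by exact_mod_cast Nat.cast_le.2 hab)⟩
    have hunion : G ⊆ ⋃ M, F M := by
      intro x hx
      obtain ⟨hx1, hx2⟩ := hx
      have hxu : x ∈ ⋃ n, spanningSets μ n := by
        rw [iUnion_spanningSets]; trivial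
      obtain ⟨M₀, hM₀⟩ := Set.mem_iUnion.1 hxu
      have hb : (range (i + 1)).sup (fun j => J j x) < ∞ :=
        (Finset.sup_lt_iff (by simp)).2 fun j _ => hx2 j
      obtain ⟨m, hm⟩ := ENNReal.exists_nat_gt hb.ne
      refine Set.mem_iUnion.2 ⟨max M₀ m,
        ⟨⟨⟨hx1, hx2⟩, monotone_spanningSets μ (le_max_left _ _) hM₀⟩, ?_⟩⟩
      intro j hj
      calc J j x ≤ (range (i + 1)).sup (fun j => J j x) := Finset.le_sup (f := fun j => J j x) hj
        _ ≤ (m : ℝ≥0∞) := hm.le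
        _ ≤ ((max M₀ m : ℕ) : ℝ≥0∞) := by exact_mod_cast Nat.cast_le.2 (le_max_right _ _)
    have hsupne : μ (⋃ M, F M) ≠ 0 := fun h => hGne (le_antisymm
      ((measure_mono hunion).trans h.le) zero_le)
    have hexM : ∃ M, μ (F M) ≠ 0 := by
      by_contra hall
      push_neg at hall
      apply hsupne
      rw [(hmono.directed_le).measure_iUnion]
      simp [hall]
    obtain ⟨M, hM⟩ := hexM
    set A := F M with hA'
    have hA : MeasurableSet A := hFm M
    have hAfin : μ A < ∞ := by
      refine lt_of_le_of_lt (measure_mono ?_) (measure_spanningSets_lt_top μ M)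
      intro x hx
      exact hx.1.2
    have hAΔ : ∀ x ∈ A, 0 < Δ x := fun x hx => hx.1.1.1
    have hAJ : ∀ j ∈ range (i + 1), ∀ x ∈ A, J j x ≤ (M : ℝ≥0∞) :=
      fun j hj x hx => hx.2 j hj
    set f : X → ℂ := A.indicator (fun _ => 1) with hfdef
    have hfm : Measurable f := measurable_const.indicator hA
    have hind : ∀ j : ℕ, (fun x => J j x * (‖f x‖₊ : ℝ≥0∞) ^ 2) = A.indicator (J j) := by
      intro j
      ext x
      by_cases hx : x ∈ A <;> simp [hfdef, Set.indicator, hx]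
    have hlint : ∀ j : ℕ, ∫⁻ x, J j x * (‖f x‖₊ : ℝ≥0∞) ^ 2 ∂μ = ∫⁻ x in A, J j x ∂μ := by
      intro j
      rw [hind j, lintegral_indicator hA]
    have hfinj : ∀ j ∈ range (i + 1), ∫⁻ x in A, J j x ∂μ < ∞ := by
      intro j hj
      calc ∫⁻ x in A, J j x ∂μ ≤ ∫⁻ _ in A, (M : ℝ≥0∞) ∂μ :=
            setLIntegral_mono measurable_const (fun x hx => hAJ j hj x hx)
        _ = M * μ A := setLIntegral_const A M
        _ < ∞ := ENNReal.mul_lt_top (ENNReal.natCast_lt_top M) hAfin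
    have hmem : ∀ j ≤ i, MemLp ((fun g x => u x * g (φ x) : (X → ℂ) → X → ℂ)^[j] f) 2 μ := by
      intro j hj
      refine (memLp2_iff ((hTm j f hfm).aestronglyMeasurable)).2 ?_
      rw [key j f hfm, hlint j]
      exact hfinj j (mem_range.2 (Nat.lt_succ_of_le hj))
    have hH := H i h1 hi f hfm hmem
    have hint : ∀ j ∈ range (i + 1), Integrable (fun x => (J j x).toReal) (μ.restrict A) :=
      fun j hj => integrable_toReal_of_lintegral_ne_top
        ((hJm j).aemeasurable.restrict) (hfinj j hj).ne
    have hval : ∀ j ∈ range (i + 1),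
        ∫ x, ‖((fun g x => u x * g (φ x) : (X → ℂ) → X → ℂ)^[j] f) x‖ ^ 2 ∂μ
          = ∫ x in A, (J j x).toReal ∂μ := by
      intro j hj
      rw [int_sq_eq ((hTm j f hfm).aestronglyMeasurable), key j f hfm, hlint j]
      rw [integral_toReal ((hJm j).aemeasurable.restrict) (ae_restrict_of_ae (hfin j))]
    rw [Finset.sum_congr rfl (fun j hj => by rw [hval j hj])] at hH
    have hsum : ∑ j ∈ range (i + 1), (-1 : ℝ) ^ j * (i.choose j) * ∫ x in A, (J j x).toReal ∂μ
        = ∫ x in A, Δ x ∂μ := by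
      calc ∑ j ∈ range (i + 1), (-1 : ℝ) ^ j * (i.choose j) * ∫ x in A, (J j x).toReal ∂μ
          = ∑ j ∈ range (i + 1), ∫ x in A, (-1 : ℝ) ^ j * (i.choose j) * (J j x).toReal ∂μ := by
            exact Finset.sum_congr rfl fun j hj => (integral_const_mul _ _).symm
        _ = ∫ x in A, ∑ j ∈ range (i + 1), (-1 : ℝ) ^ j * (i.choose j) * (J j x).toReal ∂μ :=
            (integral_finset_sum _ fun j hj => (hint j hj).const_mul _).symm
        _ = ∫ x in A, Δ x ∂μ := rfl
    rw [hsum] at hH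
    have hpos : 0 < ∫ x in A, Δ x ∂μ := by
      have hnn : 0 ≤ᵐ[μ.restrict A] Δ :=
        (ae_restrict_iff' hA).2 (ae_of_all _ fun x hx => (hAΔ x hx).le)
      have hintOn : IntegrableOn Δ A μ :=
        integrable_finset_sum _ fun j hj => (hint j hj).const_mul _
      rw [setIntegral_pos_iff_support_of_nonneg_ae hnn hintOn]
      have hsub : A ⊆ Function.support Δ ∩ A := fun x hx => ⟨(hAΔ x hx).ne', hx⟩
      exact lt_of_lt_of_le (pos_iff_ne_zero.2 hM) (measure_mono hsub)
    linarith
  · -- a.e. inequality ⇒ hyperexpansivity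
    intro H n h1 hn f hfm hmem
    have hjmeas : ∀ j : ℕ, AEMeasurable (fun x => J j x * (‖f x‖₊ : ℝ≥0∞) ^ 2) μ :=
      fun j => ((hJm j).mul ((hfm.nnnorm.coe_nnreal_ennreal).pow_const 2)).aemeasurable
    have hLfin : ∀ j ∈ range (n + 1), ∫⁻ x, J j x * (‖f x‖₊ : ℝ≥0∞) ^ 2 ∂μ ≠ ∞ := by
      intro j hj
      rw [← key j f hfm]
      exact ((memLp2_iff ((hTm j f hfm).aestronglyMeasurable)).1
        (hmem j (Nat.lt_succ_iff.1 (mem_range.1 hj)))).ne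
    have htoReal : ∀ (j : ℕ) (x : X),
        (J j x * (‖f x‖₊ : ℝ≥0∞) ^ 2).toReal = (J j x).toReal * ‖f x‖ ^ 2 := by
      intro j x
      simp [ENNReal.toReal_mul, ENNReal.toReal_pow]
    have hintg : ∀ j ∈ range (n + 1), Integrable (fun x => (J j x).toReal * ‖f x‖ ^ 2) μ := by
      intro j hj
      have := integrable_toReal_of_lintegral_ne_top (hjmeas j) (hLfin j hj)
      exact this.congr (ae_of_all _ fun x => htoReal j x)
    have hval : ∀ j ∈ range (n + 1),
        ∫ x, ‖((fun g x => u x * g (φ x) : (X → ℂ) → X → ℂ)^[j] f) x‖ ^ 2 ∂μ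
          = ∫ x, (J j x).toReal * ‖f x‖ ^ 2 ∂μ := by
      intro j hj
      rw [int_sq_eq ((hTm j f hfm).aestronglyMeasurable), key j f hfm]
      have hae : ∀ᵐ x ∂μ, J j x * (‖f x‖₊ : ℝ≥0∞) ^ 2 < ∞ :=
        (hfin j).mono fun x hx => ENNReal.mul_lt_top hx (ENNReal.pow_lt_top ENNReal.coe_lt_top)
      rw [← integral_toReal (hjmeas j) hae]
      refine integral_congr_ae (ae_of_all _ fun x => ?_)
      dsimp only
      exact htoReal j x
    calc ∑ j ∈ range (n + 1), (-1 : ℝ) ^ j * (n.choose j)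
          * ∫ x, ‖((fun g x => u x * g (φ x) : (X → ℂ) → X → ℂ)^[j] f) x‖ ^ 2 ∂μ
        = ∑ j ∈ range (n + 1),
            ∫ x, (-1 : ℝ) ^ j * (n.choose j) * ((J j x).toReal * ‖f x‖ ^ 2) ∂μ := by
          refine Finset.sum_congr rfl fun j hj => ?_
          rw [hval j hj]
          exact (integral_const_mul _ _).symm
      _ = ∫ x, ∑ j ∈ range (n + 1),
            (-1 : ℝ) ^ j * (n.choose j) * ((J j x).toReal * ‖f x‖ ^ 2) ∂μ :=
          (integral_finset_sum _ fun j hj => (hintg j hj).const_mul _).symm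
      _ = ∫ x, (∑ j ∈ range (n + 1), (-1 : ℝ) ^ j * (n.choose j) * (J j x).toReal)
            * ‖f x‖ ^ 2 ∂μ := by
          refine integral_congr_ae (ae_of_all _ fun x => ?_)
          dsimp only
          rw [Finset.sum_mul]
          exact Finset.sum_congr rfl fun j _ => (mul_assoc _ _ _).symm
      _ ≤ 0 := by
          refine integral_nonpos_of_ae ((H n h1 hn).mono fun x hx => ?_)
          exact mul_nonpos_of_nonpos_of_nonneg hx (sq_nonneg _)
end
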